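/- Consider ℝ^{n+m} with the indefinite form ⟨x,y⟩₋ = Σ_{j≤n} x_j y_j − Σ_{j>n} x_j y_j. Let A = [[C, 0],[B, D]] be block lower-triangular with C an n×n orthogonal matrix, D an m×m orthogonal matrix, and B an m×n block. Suppose every vector of the form x = A(v ⊕ 0) = C(v) ⊕ B(v), v ∈ ℝⁿ, is non-timelike, i.e. ⟨x,x⟩₋ ≥ 0. Then the operator norm of A with respect to the standard Euclidean inner product satisfies ‖A‖_∞ ≤ φ = (1+√5)/2. -/

import Mathlib

open Matrix

lemma scalar_slant (a b s : ℝ) (hs : s ^ 2 = 5) (hs1 : 1 ≤ s) :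
    a ^ 2 + (a + b) ^ 2 ≤ ((1 + s) / 2) ^ 2 * (a ^ 2 + b ^ 2) := by
  have key2 : (s - 1) * (2 * a - (1 + s) * b) ^ 2
      = 2 * ((2 * s - 2) * a ^ 2 - 8 * (a * b) + (2 * s + 2) * b ^ 2) := by
    linear_combination ((s + 1) * b ^ 2 - 4 * (a * b)) * hs
  have h1 : 0 ≤ (s - 1) * (2 * a - (1 + s) * b) ^ 2 :=
    mul_nonneg (by linarith) (sq_nonneg _)
  have hphi2 : ((1 + s) / 2) ^ 2 = (3 + s) / 2 := by linear_combination hs / 4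
  rw [hphi2]
  rw [key2] at h1
  nlinarith [h1]

lemma ortho_sum {k : ℕ} (M : Matrix (Fin k) (Fin k) ℝ) (h : M.transpose * M = 1)
    (v : Fin k → ℝ) : ∑ j, (M.mulVec v j) ^ 2 = ∑ j, v j ^ 2 := by
  have h1 : (M.mulVec v) ⬝ᵥ (M.mulVec v) = v ⬝ᵥ v := by
    rw [Matrix.dotProduct_mulVec, ← Matrix.mulVec_transpose, Matrix.mulVec_mulVec, h,
      Matrix.one_mulVec]
  simpa [dotProduct, sq] using h1

/-- Slant lemma: let `A = [[C, 0], [B, D]]` be block lower-triangular on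
`ℝⁿ ⊕ ℝᵐ` with `C`, `D` orthogonal.  If every vector `A(v ⊕ 0) = C v ⊕ B v`
is non-timelike for the indefinite form `⟨x,x⟩₋ = ‖(x-part in ℝⁿ)‖² − ‖(x-part
in ℝᵐ)‖²`, i.e. `‖B v‖² ≤ ‖C v‖²` for all `v`, then the Euclidean operator
norm of `A` is at most the golden ratio `φ = (1+√5)/2`. -/
theorem slant_lemma (n m : ℕ)
    (C : Matrix (Fin n) (Fin n) ℝ) (D : Matrix (Fin m) (Fin m) ℝ)
    (B : Matrix (Fin m) (Fin n) ℝ)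
    (hC : C.transpose * C = 1) (hD : D.transpose * D = 1)
    (hnt : ∀ v : Fin n → ℝ,
      ∑ j, (B.mulVec v j) ^ 2 ≤ ∑ j, (C.mulVec v j) ^ 2) :
    ‖Matrix.toEuclideanCLM (𝕜 := ℝ) (Matrix.fromBlocks C 0 B D)‖ ≤
      (1 + Real.sqrt 5) / 2 := by
  have hs5 : Real.sqrt 5 ^ 2 = 5 := Real.sq_sqrt (by norm_num)
  have hs5' : (1:ℝ) ≤ Real.sqrt 5 := by nlinarith [Real.sqrt_nonneg 5]
  have hφ : (0:ℝ) ≤ (1 + Real.sqrt 5) / 2 := by positivity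
  apply ContinuousLinearMap.opNorm_le_bound _ hφ
  intro x
  set v : Fin n → ℝ := fun j => x (Sum.inl j) with hv
  set w : Fin m → ℝ := fun j => x (Sum.inr j) with hw
  -- the image vector
  have hx : (WithLp.equiv 2 _) x = Sum.elim v w := by
    funext i; cases i <;> rfl
  have happ : ∀ i, (Matrix.toEuclideanCLM (𝕜 := ℝ) (Matrix.fromBlocks C 0 B D)) x i =
      Sum.elim (C.mulVec v) (B.mulVec v + D.mulVec w) i := by
    intro i
    have := Matrix.ofLp_toEuclideanCLM (𝕜 := ℝ) (Matrix.fromBlocks C 0 B D) x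
    change (WithLp.equiv 2 _) _ = Matrix.toLin' _ ((WithLp.equiv 2 _) x) at this
    rw [hx] at this
    rw [Matrix.toLin'_apply] at this
    have h2 : Matrix.fromBlocks C 0 B D *ᵥ Sum.elim v w =
        Sum.elim (C *ᵥ v + 0 *ᵥ w) (B *ᵥ v + D *ᵥ w) := Matrix.fromBlocks_mulVec C 0 B D _
    simp only [Matrix.zero_mulVec, add_zero] at h2
    rw [h2] at this
    exact congrFun this i
  -- norms
  set a : ℝ := Real.sqrt (∑ j, v j ^ 2) with ha
  set b : ℝ := Real.sqrt (∑ j, w j ^ 2) with hb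
  have ha0 : 0 ≤ a := Real.sqrt_nonneg _
  have hb0 : 0 ≤ b := Real.sqrt_nonneg _
  have ha2 : a ^ 2 = ∑ j, v j ^ 2 := Real.sq_sqrt (by positivity)
  have hb2 : b ^ 2 = ∑ j, w j ^ 2 := Real.sq_sqrt (by positivity)
  have hxnorm : ‖x‖ ^ 2 = a ^ 2 + b ^ 2 := by
    rw [EuclideanSpace.norm_eq, Real.sq_sqrt (by positivity), ha2, hb2,
      Fintype.sum_sum_type]
    simp [v, w, sq_abs]
  -- bound on second block via Minkowski in EuclideanSpace
  have hBD : ∑ j, (B.mulVec v j + D.mulVec w j) ^ 2 ≤ (a + b) ^ 2 := by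
    set p : EuclideanSpace ℝ (Fin m) := (WithLp.equiv 2 _).symm (B.mulVec v)
    set q : EuclideanSpace ℝ (Fin m) := (WithLp.equiv 2 _).symm (D.mulVec w)
    have hp : ‖p‖ ^ 2 = ∑ j, (B.mulVec v j) ^ 2 := by
      rw [EuclideanSpace.norm_eq, Real.sq_sqrt (by positivity)]
      simp [p, sq_abs]
    have hq : ‖q‖ = b := by
      rw [EuclideanSpace.norm_eq, hb]
      congr 1
      rw [← ortho_sum D hD w]
      simp [q, sq_abs]
    have hpa : ‖p‖ ≤ a := by
      have : ‖p‖ ^ 2 ≤ a ^ 2 := by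
        rw [hp, ha2, ← ortho_sum C hC v]; exact hnt v
      nlinarith [norm_nonneg p]
    have hsum : ∑ j, (B.mulVec v j + D.mulVec w j) ^ 2 = ‖p + q‖ ^ 2 := by
      rw [EuclideanSpace.norm_eq, Real.sq_sqrt (by positivity)]
      simp [p, q, sq_abs, WithLp.equiv_symm_apply, WithLp.toLp_add]
    rw [hsum]
    have := norm_add_le p q
    nlinarith [norm_nonneg (p + q), norm_nonneg q]
  -- total norm squared
  have hAx : ‖(Matrix.toEuclideanCLM (𝕜 := ℝ) (Matrix.fromBlocks C 0 B D)) x‖ ^ 2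
      ≤ a ^ 2 + (a + b) ^ 2 := by
    rw [EuclideanSpace.norm_eq, Real.sq_sqrt (by positivity)]
    calc ∑ i, ‖(Matrix.toEuclideanCLM (𝕜 := ℝ) (Matrix.fromBlocks C 0 B D)) x i‖ ^ 2
        = ∑ i, (Sum.elim (C.mulVec v) (B.mulVec v + D.mulVec w) i) ^ 2 := by
          apply Finset.sum_congr rfl; intro i _; rw [happ i, Real.norm_eq_abs, sq_abs]
      _ = (∑ j, (C.mulVec v j) ^ 2) + ∑ j, (B.mulVec v j + D.mulVec w j) ^ 2 := by
          rw [Fintype.sum_sum_type]; simp [Pi.add_apply]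
      _ ≤ a ^ 2 + (a + b) ^ 2 := by
          rw [ortho_sum C hC v, ← ha2]; exact add_le_add_right hBD _
  -- scalar inequality
  have key : a ^ 2 + (a + b) ^ 2 ≤ ((1 + Real.sqrt 5) / 2 * Real.sqrt (a ^ 2 + b ^ 2)) ^ 2 := by
    have : ((1 + Real.sqrt 5) / 2 * Real.sqrt (a ^ 2 + b ^ 2)) ^ 2
        = ((1 + Real.sqrt 5) / 2) ^ 2 * (a ^ 2 + b ^ 2) := by
      rw [mul_pow, Real.sq_sqrt (by positivity)]
    rw [this]
    exact scalar_slant a b _ hs5 hs5'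
  have hxn : ‖x‖ = Real.sqrt (a ^ 2 + b ^ 2) := by
    rw [← hxnorm, Real.sqrt_sq (norm_nonneg x)]
  rw [hxn]
  have h3 := Real.sqrt_le_sqrt (hAx.trans key)
  rwa [Real.sqrt_sq (norm_nonneg _),
    Real.sqrt_sq (mul_nonneg hφ (Real.sqrt_nonneg _))] at h3
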